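/- Let Γ be a countable torsion-free group such that for every prime p the group algebra (ℤ/pℤ)[Γ] and the rational group algebra ℚ[Γ] are integral domains (e.g., Γ = ℤ^d). Let f ∈ ℤ[Γ] be nonzero. Then the quotient module ℤ[Γ]/ℤ[Γ]f is torsion-free as an abelian group if and only if f is primitive (no integer n ≥ 2 divides all coefficients of f). -/

import Mathlib

open scoped Classical

noncomputable def myCastHom (S : Type*) [Ring S] (Γ : Type*) [Group Γ] :
    MonoidAlgebra ℤ Γ →+* MonoidAlgebra S Γ :=
  MonoidAlgebra.liftNCRingHom (MonoidAlgebra.singleOneRingHom.comp (Int.castRingHom S))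
    (MonoidAlgebra.of S Γ) (fun a γ => by
      show MonoidAlgebra.single 1 ((a : ℤ) : S) * MonoidAlgebra.single γ 1 =
        MonoidAlgebra.single γ 1 * MonoidAlgebra.single 1 ((a : ℤ) : S)
      rw [MonoidAlgebra.single_mul_single, MonoidAlgebra.single_mul_single]
      simp)

lemma myCastHom_apply (S : Type*) [Ring S] {Γ : Type*} [Group Γ]
    (x : MonoidAlgebra ℤ Γ) (γ : Γ) : (myCastHom S Γ x).coeff γ = ((x.coeff γ : ℤ) : S) := by
  induction x using MonoidAlgebra.induction with
  | zero => simp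
  | single_add a b x _ _ ih =>
    have hs : myCastHom S Γ (MonoidAlgebra.single a b) = MonoidAlgebra.single a (b : S) := by
      have : myCastHom S Γ (MonoidAlgebra.single a b) =
          MonoidAlgebra.single 1 ((b : ℤ) : S) * MonoidAlgebra.single a 1 :=
        MonoidAlgebra.liftNC_single _ _ _ _
      rw [this, MonoidAlgebra.single_mul_single, one_mul, mul_one]
    rw [map_add, hs]
    simp only [MonoidAlgebra.coeff_add, Finsupp.add_apply, ih, MonoidAlgebra.coeff_single,
      Finsupp.single_apply, Int.cast_add]
    split_ifs <;> simp

/-- For `Γ` a countable torsion-free group whose group algebras over `ℚ` and over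
`ℤ/pℤ` (for every prime `p`) are integral domains, and `f ∈ ℤ[Γ]` nonzero, the
quotient `ℤ[Γ]/ℤ[Γ]f` is torsion-free as an abelian group if and only if `f` is
primitive (no integer `n ≥ 2` divides all coefficients of `f`). -/
theorem quotient_torsionFree_iff_primitive (Γ : Type*) [Group Γ] [Countable Γ]
    (htf : ∀ g : Γ, g ≠ 1 → ¬IsOfFinOrder g)
    (hQ : IsDomain (MonoidAlgebra ℚ Γ))
    (hp : ∀ p : ℕ, p.Prime → IsDomain (MonoidAlgebra (ZMod p) Γ))
    (f : MonoidAlgebra ℤ Γ) (hf : f ≠ 0) :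
    ((∀ (g : MonoidAlgebra ℤ Γ) (m : ℤ), m ≠ 0 →
        (∃ h : MonoidAlgebra ℤ Γ, m • g = h * f) →
        ∃ h : MonoidAlgebra ℤ Γ, g = h * f) ↔
      ∀ m : ℤ, 2 ≤ m → ¬ (∀ γ : Γ, m ∣ f.coeff γ)) := by
  -- no zero divisors in ℤ[Γ]
  have hinj : ∀ (S : Type) [Ring S], ∀ x : MonoidAlgebra ℤ Γ,
      myCastHom S Γ x = 0 ↔ ∀ γ : Γ, ((x.coeff γ : ℤ) : S) = 0 := by
    intro S _ x
    constructor
    · intro h0 γ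
      rw [← myCastHom_apply, h0]; rfl
    · intro h0
      ext γ
      rw [myCastHom_apply]; exact h0 γ
  have hnzd : ∀ a b : MonoidAlgebra ℤ Γ, a * b = 0 → a = 0 ∨ b = 0 := by
    intro a b hab
    have : myCastHom ℚ Γ a * myCastHom ℚ Γ b = 0 := by rw [← map_mul, hab, map_zero]
    rcases mul_eq_zero.mp this with h0 | h0
    · left; ext γ
      have := ((hinj ℚ a).mp h0) γ
      simp only [MonoidAlgebra.coeff_zero, Finsupp.coe_zero, Pi.zero_apply]
      exact_mod_cast this
    · right; ext γ
      have := ((hinj ℚ b).mp h0) γ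
      simp only [MonoidAlgebra.coeff_zero, Finsupp.coe_zero, Pi.zero_apply]
      exact_mod_cast this
  constructor
  · -- torsion-free → primitive
    intro H m hm hdvd
    set g : MonoidAlgebra ℤ Γ := MonoidAlgebra.ofCoeff (Finsupp.mapRange (fun z => z / m) (by simp) f.coeff) with hg
    have hmg : m • g = f := by
      ext γ
      rw [MonoidAlgebra.coeff_smul_apply, hg, MonoidAlgebra.coeff_ofCoeff, Finsupp.mapRange_apply, smul_eq_mul,
        Int.mul_ediv_cancel' (hdvd γ)]
    obtain ⟨h, hh⟩ := H g m (by omega) ⟨1, by rw [one_mul, hmg]⟩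
    have hzero : (1 - m • h) * f = 0 := by
      have : (m • h) * f = f := by rw [smul_mul_assoc, ← hh, hmg]
      rw [sub_mul, one_mul, this, sub_self]
    rcases hnzd _ _ hzero with h1 | h2
    · have h1' : (1 : MonoidAlgebra ℤ Γ) = m • h := sub_eq_zero.mp h1
      have hc := congrArg (fun x : MonoidAlgebra ℤ Γ => x.coeff (1 : Γ)) h1'
      simp only [MonoidAlgebra.coeff_smul_apply, smul_eq_mul] at hc
      rw [MonoidAlgebra.one_def, MonoidAlgebra.coeff_single, Finsupp.single_eq_same] at hc
      have hd : m ∣ 1 := ⟨h.coeff 1, hc⟩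
      have := Int.le_of_dvd one_pos hd
      omega
    · exact hf h2
  · -- primitive → torsion-free
    intro hprim
    have key : ∀ p : ℕ, p.Prime → ∀ h : MonoidAlgebra ℤ Γ,
        (∀ γ : Γ, (p : ℤ) ∣ (h * f).coeff γ) → ∃ h' : MonoidAlgebra ℤ Γ, h = (p : ℤ) • h' := by
      intro p pp h hdvd
      haveI := hp p pp
      have hf0 : myCastHom (ZMod p) Γ f ≠ 0 := by
        intro h0
        have := (hinj (ZMod p) f).mp h0
        apply hprim (p : ℤ) (by exact_mod_cast pp.two_le)
        intro γ
        exact (ZMod.intCast_zmod_eq_zero_iff_dvd _ p).mp (this γ)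
      have hhf : myCastHom (ZMod p) Γ h * myCastHom (ZMod p) Γ f = 0 := by
        rw [← map_mul]
        refine (hinj (ZMod p) (h * f)).mpr fun γ => ?_
        exact (ZMod.intCast_zmod_eq_zero_iff_dvd _ p).mpr (hdvd γ)
      have hh0 : myCastHom (ZMod p) Γ h = 0 := by
        rcases mul_eq_zero.mp hhf with h0 | h0
        · exact h0
        · exact absurd h0 hf0
      have hdh : ∀ γ : Γ, (p : ℤ) ∣ h.coeff γ := fun γ =>
        (ZMod.intCast_zmod_eq_zero_iff_dvd _ p).mp ((hinj (ZMod p) h).mp hh0 γ)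
      refine ⟨MonoidAlgebra.ofCoeff (Finsupp.mapRange (fun z => z / (p : ℤ)) (by simp) h.coeff), ?_⟩
      ext γ
      rw [MonoidAlgebra.coeff_smul_apply, MonoidAlgebra.coeff_ofCoeff, Finsupp.mapRange_apply, smul_eq_mul,
        Int.mul_ediv_cancel' (hdh γ)]
    have main : ∀ n : ℕ, ∀ m : ℤ, m.natAbs = n → m ≠ 0 →
        ∀ g h : MonoidAlgebra ℤ Γ, m • g = h * f →
        ∃ h' : MonoidAlgebra ℤ Γ, g = h' * f := by
      intro n
      induction n using Nat.strong_induction_on with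
      | _ n ih =>
        intro m hmn hm g h hgh
        have hcancel : ∀ c : ℤ, c ≠ 0 → ∀ x y : MonoidAlgebra ℤ Γ,
            c • x = c • y → x = y := by
          intro c hc x y hxy
          ext γ
          have := congrArg (fun z : MonoidAlgebra ℤ Γ => z.coeff γ) hxy
          simp only [MonoidAlgebra.coeff_smul_apply, smul_eq_mul] at this
          exact mul_left_cancel₀ hc this
        by_cases h1 : m.natAbs = 1
        · rcases Int.natAbs_eq_iff.mp h1 with rfl | rfl
          · exact ⟨h, by simpa using hgh⟩
          · refine ⟨-h, ?_⟩
            have hneg : (-1 : ℤ) • g = h * f := by simpa using hgh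
            rw [neg_mul, ← hneg]
            simp
        · obtain ⟨p, pp, hpd⟩ := Nat.exists_prime_and_dvd h1
          have hpm : (p : ℤ) ∣ m :=
            dvd_trans (Int.natCast_dvd_natCast.mpr hpd) (Int.natAbs_dvd.mpr dvd_rfl)
          obtain ⟨m', rfl⟩ := hpm
          have hm' : m' ≠ 0 := by
            intro h0; apply hm; rw [h0, mul_zero]
          have hdvd : ∀ γ : Γ, (p : ℤ) ∣ (h * f).coeff γ := by
            intro γ
            rw [← hgh, MonoidAlgebra.coeff_smul_apply, smul_eq_mul]
            exact ⟨m' * g.coeff γ, by ring⟩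
          obtain ⟨h', rfl⟩ := key p pp h hdvd
          have hstep : m' • g = h' * f := by
            have hp0 : (p : ℤ) ≠ 0 := by exact_mod_cast pp.ne_zero
            apply hcancel _ hp0
            rw [smul_smul, hgh, smul_mul_assoc]
          have habs : ((p : ℤ) * m').natAbs = p * m'.natAbs := by
            rw [Int.natAbs_mul, Int.natAbs_natCast]
          rw [habs] at hmn
          have h2 := pp.two_le
          have h3 : m'.natAbs ≠ 0 := Int.natAbs_ne_zero.mpr hm'
          have hlt : m'.natAbs < p * m'.natAbs := by
            have := Nat.pos_of_ne_zero h3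
            nlinarith
          exact ih m'.natAbs (by omega) m' rfl hm' g h' hstep
    rintro g m hm ⟨h, hgh⟩
    exact main m.natAbs m rfl hm g h hgh
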